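/- Subset extraction lemma for limsup of sums (Lemma 4 of the paper): Let q_i : ℕ → ℝ≥0 for i ∈ {1,...,N} be nonnegative sequences with q_i(T) ≤ A_max·(T+1), and set s = limsup_{T→∞} Σ_i q_i(T)/T. If s > 0, then there exists a nonempty subset I* ⊆ {1,...,N} and a strictly increasing sequence of indices T_k such that: (a) lim_k Σ_{i∈I*} q_i(T_k)/T_k = s; (b) liminf_k q_i(T_k)/T_k > 0 for every i ∈ I*; and (c) limsup_k q_i(T_k)/T_k = 0 for every i ∉ I*. -/

import Mathlib

open Filter

/-- Subset extraction lemma: if the limsup of the normalized sum of N bounded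
nonnegative sequences is s > 0, one can find a nonempty dominant subset I* of
coordinates and a strictly increasing subsequence T_k along which the I*-sum
converges to s, every coordinate in I* has positive liminf, and every
coordinate outside I* has limsup zero. -/
theorem stmt_11 (N : ℕ) (hN : 0 < N) (Amax : ℝ) (hAmax : 0 < Amax)
    (q : Fin N → ℕ → ℝ)
    (hq0 : ∀ i T, 0 ≤ q i T)
    (hqb : ∀ i T, q i T ≤ Amax * (T + 1))
    (s : ℝ) (hs : limsup (fun T : ℕ => ∑ i, q i T / T) atTop = s) (hspos : 0 < s) :
    ∃ I : Finset (Fin N), I.Nonempty ∧ ∃ Tk : ℕ → ℕ, StrictMono Tk ∧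
      Tendsto (fun k => ∑ i ∈ I, q i (Tk k) / (Tk k)) atTop (nhds s) ∧
      (∀ i ∈ I, 0 < liminf (fun k => q i (Tk k) / (Tk k)) atTop) ∧
      (∀ i ∉ I, limsup (fun k => q i (Tk k) / (Tk k)) atTop = 0) := by
  classical
  have hcoord : ∀ i T, q i T / (T : ℝ) ∈ Set.Icc (0:ℝ) (2*Amax) := by
    intro i T
    constructor
    · exact div_nonneg (hq0 i T) (Nat.cast_nonneg T)
    · rcases Nat.eq_zero_or_pos T with h | h
      · simp [h]; linarith
      · have hT : (0:ℝ) < T := by exact_mod_cast h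
        have hT1 : (1:ℝ) ≤ T := by exact_mod_cast h
        rw [div_le_iff₀ hT]
        calc q i T ≤ Amax * (T+1) := hqb i T
          _ ≤ 2*Amax*T := by nlinarith
  set F : ℕ → ℝ := fun T => ∑ i, q i T / T with hF
  have hF0 : ∀ T, 0 ≤ F T := fun T => Finset.sum_nonneg (fun i _ => (hcoord i T).1)
  have hFbd : ∀ T, F T ≤ N * (2*Amax) := by
    intro T
    calc F T ≤ ∑ _i : Fin N, (2*Amax) :=
          Finset.sum_le_sum (fun i _ => (hcoord i T).2)
      _ = N * (2*Amax) := by simp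
  have hbdd : IsBoundedUnder (· ≤ ·) atTop F := isBoundedUnder_of ⟨N * (2*Amax), hFbd⟩
  have hcobdd : IsCoboundedUnder (· ≤ ·) atTop F :=
    IsBoundedUnder.isCoboundedUnder_le (isBoundedUnder_of ⟨0, hF0⟩)
  -- Step 1: subsequence along which F → s
  have hfreq : ∀ n : ℕ, ∃ᶠ T in atTop, s - 1/(n+1) < F T := by
    intro n
    apply frequently_lt_of_lt_limsup hcobdd
    rw [hs]
    have : (0:ℝ) < 1/((n:ℝ)+1) := by positivity
    linarith
  obtain ⟨φ, hφmono, hφ⟩ := Filter.extraction_forall_of_frequently hfreq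
  have hφtop : Tendsto φ atTop atTop := hφmono.tendsto_atTop
  have hFtend : Tendsto (fun n => F (φ n)) atTop (nhds s) := by
    rw [tendsto_order]
    constructor
    · intro b hb
      have h1 : ∀ᶠ n : ℕ in atTop, 1/((n:ℝ)+1) < s - b :=
        tendsto_one_div_add_atTop_nhds_zero_nat.eventually_lt_const (by linarith)
      filter_upwards [h1] with n hn
      have := hφ n
      linarith
    · intro b hb
      have h2 : ∀ᶠ T in atTop, F T < b :=
        eventually_lt_of_limsup_lt (by rw [hs]; exact hb) hbdd
      exact hφtop.eventually h2
  -- Step 2: sub-subsequence with all coordinates converging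
  have hScompact : IsCompact (Set.univ.pi fun _ : Fin N => Set.Icc (0:ℝ) (2*Amax)) :=
    isCompact_univ_pi fun _ => isCompact_Icc
  obtain ⟨a, haS, ψ, hψmono, hψtend⟩ := hScompact.tendsto_subseq
    (x := fun n => fun i => q i (φ n) / (φ n : ℝ))
    (fun n => by
      rw [Set.mem_univ_pi]
      exact fun i => hcoord i (φ n))
  set Tk : ℕ → ℕ := fun k => φ (ψ k) with hTk
  have hTkmono : StrictMono Tk := hφmono.comp hψmono
  have hcoordtend : ∀ i, Tendsto (fun k => q i (Tk k) / (Tk k : ℝ)) atTop (nhds (a i)) :=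
    fun i => tendsto_pi_nhds.mp hψtend i
  have hsumtend : Tendsto (fun k => F (Tk k)) atTop (nhds s) :=
    hFtend.comp hψmono.tendsto_atTop
  have hsumtend' : Tendsto (fun k => ∑ i, q i (Tk k) / (Tk k : ℝ)) atTop (nhds (∑ i, a i)) :=
    tendsto_finset_sum Finset.univ (fun i _ => hcoordtend i)
  have hsuma : ∑ i, a i = s := tendsto_nhds_unique hsumtend' hsumtend
  have ha0 : ∀ i, 0 ≤ a i := fun i => (haS i (Set.mem_univ i)).1
  set I : Finset (Fin N) := Finset.univ.filter (fun i => 0 < a i) with hI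
  have hIz : ∀ i ∉ I, a i = 0 := by
    intro i hi
    simp only [hI, Finset.mem_filter, Finset.mem_univ, true_and, not_lt] at hi
    exact le_antisymm hi (ha0 i)
  have hIne : I.Nonempty := by
    by_contra h
    rw [Finset.not_nonempty_iff_eq_empty] at h
    have : ∑ i, a i = 0 := Finset.sum_eq_zero fun i _ => hIz i (by simp [h])
    rw [hsuma] at this
    linarith
  refine ⟨I, hIne, Tk, hTkmono, ?_, ?_, ?_⟩
  · have hIsum : ∑ i ∈ I, a i = s := by
      rw [← hsuma]
      exact Finset.sum_subset (Finset.subset_univ I) (fun i _ hi => hIz i hi)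
    rw [← hIsum]
    exact tendsto_finset_sum I (fun i _ => hcoordtend i)
  · intro i hi
    rw [(hcoordtend i).liminf_eq]
    simp only [hI, Finset.mem_filter] at hi
    exact hi.2
  · intro i hi
    rw [(hcoordtend i).limsup_eq]
    exact hIz i hi
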